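/- Let r, k, s be integers with k + r ≠ 0 and k + s ≠ 0, and let n be a non-negative integer. Then the integer 5·F_{k+r}·F_{k+s} divides L_{2k+r+s}^{n+1} − (−1)^{(k+s)(n+1)} L_{r−s}^{n+1} (divisibility in the ring of integers). -/

import Mathlib

/-- Integer-indexed Fibonacci numbers: `fibZ n = F n`, with
`F (-n) = (-1)^(n+1) * F n`. -/
def fibZ (n : ℤ) : ℤ :=
  if 0 ≤ n then (Nat.fib n.toNat : ℤ) else (-1) ^ (n.natAbs + 1) * (Nat.fib n.natAbs : ℤ)

/-- Integer-indexed Lucas numbers: `lucZ n = L n = F (n+1) + F (n-1)`. -/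
def lucZ (n : ℤ) : ℤ := fibZ (n + 1) + fibZ (n - 1)

lemma fibZ_ofNat (m : ℕ) : fibZ m = Nat.fib m := by
  simp [fibZ]

lemma fibZ_neg_ofNat (m : ℕ) : fibZ (-(m : ℤ)) = (-1) ^ (m + 1) * Nat.fib m := by
  rcases Nat.eq_zero_or_pos m with h | h
  · simp [h, fibZ]
  · rw [fibZ, if_neg (by omega)]
    simp

lemma fibZ_add_two (n : ℤ) : fibZ (n + 2) = fibZ (n + 1) + fibZ n := by
  cases n with
  | ofNat m =>
      have h0 : ((Int.ofNat m) : ℤ) + 2 = ((m + 2 : ℕ) : ℤ) := by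
        rw [Int.ofNat_eq_coe]; push_cast; ring
      have h1 : ((Int.ofNat m) : ℤ) + 1 = ((m + 1 : ℕ) : ℤ) := by
        rw [Int.ofNat_eq_coe]; push_cast; ring
      have h2 : ((Int.ofNat m) : ℤ) = ((m : ℕ) : ℤ) := rfl
      rw [h0, h1, h2, fibZ_ofNat, fibZ_ofNat, fibZ_ofNat, Nat.fib_add_two]
      push_cast; ring
  | negSucc m =>
      match m with
      | 0 => decide
      | 1 => decide
      | (p + 2) =>
          have h0 : (Int.negSucc (p + 2)) + 2 = -((p + 1 : ℕ) : ℤ) := by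
            rw [Int.negSucc_eq]; push_cast; ring
          have h1 : (Int.negSucc (p + 2)) + 1 = -((p + 2 : ℕ) : ℤ) := by
            rw [Int.negSucc_eq]; push_cast; ring
          have h2 : (Int.negSucc (p + 2) : ℤ) = -((p + 3 : ℕ) : ℤ) := by
            rw [Int.negSucc_eq]; push_cast; ring
          rw [h0, h1, h2, fibZ_neg_ofNat, fibZ_neg_ofNat, fibZ_neg_ofNat]
          have h3 : Nat.fib (p + 3) = Nat.fib (p + 2) + Nat.fib (p + 1) := by
            have h := Nat.fib_add_two (n := p + 1)
            rw [show p + 1 + 2 = p + 3 by omega, show p + 1 + 1 = p + 2 by omega] at h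
            omega
          rw [h3]
          push_cast
          ring

lemma fibZ_rec (n : ℤ) : fibZ n = fibZ (n + 1) - fibZ (n - 1) := by
  have := fibZ_add_two (n - 1)
  have e1 : n - 1 + 2 = n + 1 := by ring
  have e2 : n - 1 + 1 = n := by ring
  rw [e1, e2] at this
  linarith

lemma lucZ_add_two (n : ℤ) : lucZ (n + 2) = lucZ (n + 1) + lucZ n := by
  unfold lucZ
  have h1 : fibZ (n + 2 + 1) = fibZ (n + 1 + 1) + fibZ (n + 1) := by
    have := fibZ_add_two (n + 1)
    rw [show n + 1 + 2 = n + 2 + 1 by ring] at this; exact this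
  have h2 : fibZ (n + 2 - 1) = fibZ (n + 1 - 1) + fibZ (n - 1) := by
    have := fibZ_add_two (n - 1)
    rw [show n - 1 + 2 = n + 2 - 1 by ring, show n - 1 + 1 = n + 1 - 1 by ring] at this
    exact this
  rw [h1, h2]; ring

-- key identity: L_{a+b} - (-1)^b L_{a-b} = 5 F_a F_b
lemma key (a b : ℤ) :
    lucZ (a + b) - (b.negOnePow : ℤ) * lucZ (a - b) = 5 * fibZ a * fibZ b := by
  -- statement as predicate
  set P : ℤ → Prop := fun b =>
    lucZ (a + b) - (b.negOnePow : ℤ) * lucZ (a - b) = 5 * fibZ a * fibZ b with hP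
  show P b
  have hP0 : P 0 := by
    simp only [hP, add_zero, sub_zero, Int.negOnePow_zero, Units.val_one, one_mul]
    have : fibZ 0 = 0 := by norm_num [fibZ]
    rw [this]; ring
  have hP1 : P 1 := by
    simp only [hP, Int.negOnePow_one, Units.val_neg, Units.val_one]
    have h1 : lucZ (a + 1) = fibZ (a + 2) + fibZ a := by
      unfold lucZ; congr 1 <;> congr 1 <;> ring
    have h2 : lucZ (a - 1) = fibZ a + fibZ (a - 2) := by
      unfold lucZ; congr 1 <;> congr 1 <;> ring
    have h3 : fibZ (a + 2) = fibZ (a + 1) + fibZ a := fibZ_add_two a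
    have h4 : fibZ (a - 2) = fibZ a - fibZ (a - 1) := by
      have := fibZ_add_two (a - 2)
      have e1 : a - 2 + 2 = a := by ring
      have e2 : a - 2 + 1 = a - 1 := by ring
      rw [e1, e2] at this; linarith
    have h5 : fibZ (a + 1) = fibZ a + fibZ (a - 1) := by
      have := fibZ_add_two (a - 1)
      have e1 : a - 1 + 2 = a + 1 := by ring
      have e2 : a - 1 + 1 = a := by ring
      rw [e1, e2] at this; linarith
    have h6 : fibZ 1 = 1 := by norm_num [fibZ]
    rw [h1, h2, h3, h4, h5, h6]; ring
  -- linear combination step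
  have hstep : ∀ c : ℤ, P c → P (c + 1) → P (c + 2) := by
    intro c h1 h2
    simp only [hP] at h1 h2 ⊢
    have e1 : a + (c + 2) = (a + c) + 2 := by ring
    have e2 : a - (c + 2) = (a - c) - 2 := by ring
    have e3 : a + (c + 1) = (a + c) + 1 := by ring
    have e4 : a - (c + 1) = (a - c) - 1 := by ring
    rw [e3, e4] at h2
    rw [e1, e2]
    have l1 : lucZ ((a + c) + 2) = lucZ ((a + c) + 1) + lucZ (a + c) := lucZ_add_two _
    have l2 : lucZ ((a - c) - 2) = lucZ (a - c) - lucZ ((a - c) - 1) := by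
      have := lucZ_add_two ((a - c) - 2)
      have e5 : a - c - 2 + 2 = a - c := by ring
      have e6 : a - c - 2 + 1 = a - c - 1 := by ring
      rw [e5, e6] at this; linarith
    have f1 : fibZ (c + 2) = fibZ (c + 1) + fibZ c := fibZ_add_two c
    have s1 : ((c + 2).negOnePow : ℤ) = (c.negOnePow : ℤ) := by
      rw [show (c + 2 : ℤ) = (c + 1) + 1 by ring, Int.negOnePow_succ, Int.negOnePow_succ]
      push_cast; ring
    have s2 : ((c + 1).negOnePow : ℤ) = -(c.negOnePow : ℤ) := by
      rw [Int.negOnePow_succ]; push_cast; ring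
    rw [s2] at h2
    rw [l1, l2, f1, s1]
    linarith
  have hstepdown : ∀ c : ℤ, P (c + 1) → P (c + 2) → P c := by
    intro c h1 h2
    simp only [hP] at h1 h2 ⊢
    have e1 : a + (c + 2) = (a + c) + 2 := by ring
    have e2 : a - (c + 2) = (a - c) - 2 := by ring
    have e3 : a + (c + 1) = (a + c) + 1 := by ring
    have e4 : a - (c + 1) = (a - c) - 1 := by ring
    rw [e3, e4] at h1
    rw [e1, e2] at h2
    have l1 : lucZ ((a + c) + 2) = lucZ ((a + c) + 1) + lucZ (a + c) := lucZ_add_two _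
    have l2 : lucZ ((a - c) - 2) = lucZ (a - c) - lucZ ((a - c) - 1) := by
      have := lucZ_add_two ((a - c) - 2)
      have e5 : a - c - 2 + 2 = a - c := by ring
      have e6 : a - c - 2 + 1 = a - c - 1 := by ring
      rw [e5, e6] at this; linarith
    have f1 : fibZ (c + 2) = fibZ (c + 1) + fibZ c := fibZ_add_two c
    have s1 : ((c + 2).negOnePow : ℤ) = (c.negOnePow : ℤ) := by
      rw [show (c + 2 : ℤ) = (c + 1) + 1 by ring, Int.negOnePow_succ, Int.negOnePow_succ]
      push_cast; ring
    have s2 : ((c + 1).negOnePow : ℤ) = -(c.negOnePow : ℤ) := by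
      rw [Int.negOnePow_succ]; push_cast; ring
    rw [s2] at h1
    rw [l1, l2, f1, s1] at h2
    linarith
  -- two-step induction
  have main : ∀ c : ℤ, P c ∧ P (c + 1) := by
    intro c
    induction c using Int.induction_on with
    | zero => exact ⟨hP0, hP1⟩
    | succ i ih =>
        refine ⟨ih.2, ?_⟩
        have h := hstep i ih.1 ih.2
        rw [show ((i : ℤ) + 1 + 1) = (i : ℤ) + 2 by ring]
        exact h
    | pred i ih =>
        have h1 : P (-(i : ℤ) - 1 + 1) := by
          rw [show -(i : ℤ) - 1 + 1 = -(i : ℤ) by ring]; exact ih.1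
        have h2 : P (-(i : ℤ) - 1 + 2) := by
          rw [show -(i : ℤ) - 1 + 2 = -(i : ℤ) + 1 by ring]; exact ih.2
        exact ⟨hstepdown _ h1 h2, h1⟩
  exact (main b).1

lemma negOnePow_mul_natCast (a : ℤ) (m : ℕ) :
    ((a * (m : ℤ)).negOnePow : ℤ) = (a.negOnePow : ℤ) ^ m := by
  induction m with
  | zero => simp
  | succ k ih =>
      have : a * ((k : ℤ) + 1) = a * (k : ℤ) + a := by ring
      push_cast
      rw [this, Int.negOnePow_add]
      push_cast
      rw [ih]
      ring

theorem cor_lucas_power_dvd (r k s : ℤ) (hkr : k + r ≠ 0) (hks : k + s ≠ 0) (n : ℕ) :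
    (5 * fibZ (k + r) * fibZ (k + s))
      ∣ lucZ (2 * k + r + s) ^ (n + 1)
        - (((k + s) * ((n : ℤ) + 1)).negOnePow : ℤ) * lucZ (r - s) ^ (n + 1) := by
  have hkey := key (k + r) (k + s)
  have e1 : (k + r) + (k + s) = 2 * k + r + s := by ring
  have e2 : (k + r) - (k + s) = r - s := by ring
  rw [e1, e2] at hkey
  have hε : (((k + s) * ((n : ℤ) + 1)).negOnePow : ℤ)
      = ((k + s).negOnePow : ℤ) ^ (n + 1) := by
    have : ((n : ℤ) + 1) = ((n + 1 : ℕ) : ℤ) := by push_cast; ring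
    rw [this, negOnePow_mul_natCast]
  rw [hε]
  have hdvd := sub_dvd_pow_sub_pow (lucZ (2 * k + r + s))
      (((k + s).negOnePow : ℤ) * lucZ (r - s)) (n + 1)
  rw [hkey, mul_pow] at hdvd
  exact hdvd
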